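/- If unit vectors z₁ and z₂ in a normed space X satisfy the condition that the set of supporting functionals at z₁ equals the set of supporting functionals at z₂, then {x : z₁ ⊥ x} = {x : z₂ ⊥ x}. -/

import Mathlib

open Metric

lemma orth_of_dual {𝕜 X : Type*} [RCLike 𝕜] [NormedAddCommGroup X] [NormedSpace 𝕜 X]
    {z x : X} (hz : ‖z‖ = 1) (h : ∃ f : X →L[𝕜] 𝕜, (‖f‖ = 1 ∧ f z = 1) ∧ f x = 0) :
    ∀ l : 𝕜, ‖z + l • x‖ ≥ ‖z‖ := by
  obtain ⟨f, ⟨hf1, hfz⟩, hfx⟩ := h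
  intro l
  have : ‖f (z + l • x)‖ ≤ ‖f‖ * ‖z + l • x‖ := f.le_opNorm _
  have h2 : f (z + l • x) = 1 := by simp [hfz, hfx]
  rw [h2, hf1, one_mul] at this
  simpa [hz] using this

lemma dual_of_orth {𝕜 X : Type*} [RCLike 𝕜] [NormedAddCommGroup X] [NormedSpace 𝕜 X]
    {z x : X} (hz : ‖z‖ = 1) (h : ∀ l : 𝕜, ‖z + l • x‖ ≥ ‖z‖) :
    ∃ f : X →L[𝕜] 𝕜, (‖f‖ = 1 ∧ f z = 1) ∧ f x = 0 := by
  set M : Submodule 𝕜 X := Submodule.span 𝕜 {x} with hM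
  haveI : FiniteDimensional 𝕜 M := by infer_instance
  haveI : IsClosed (M : Set X) := Submodule.closed_of_finiteDimensional M
  set Q := X ⧸ M
  have hmkle : ∀ y : X, ‖(Submodule.Quotient.mk y : Q)‖ ≤ ‖y‖ := fun y =>
    Submodule.Quotient.norm_mk_le M y
  -- norm of mk z is 1
  have hge : (1 : ℝ) ≤ ‖(Submodule.Quotient.mk z : Q)‖ := by
    rw [show ‖(Submodule.Quotient.mk z : Q)‖ = ‖((z : X ⧸ M.toAddSubgroup))‖ from rfl]
    rw [QuotientAddGroup.norm_mk]
    rw [infDist_eq_iInf]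
    haveI : Nonempty (M.toAddSubgroup : Set X) := ⟨⟨0, by simp⟩⟩
    apply le_ciInf
    rintro ⟨m, hm⟩
    simp only [SetLike.mem_coe] at hm
    obtain ⟨l, rfl⟩ := Submodule.mem_span_singleton.mp hm
    rw [dist_eq_norm]
    have := h (-l)
    simpa [hz, sub_eq_add_neg, ← neg_smul] using this
  have hnorm : ‖(Submodule.Quotient.mk z : Q)‖ = 1 :=
    le_antisymm (by simpa [hz] using hmkle z) hge
  have hne : (Submodule.Quotient.mk z : Q) ≠ 0 := by
    intro h0; rw [h0, norm_zero] at hnorm; norm_num at hnorm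
  obtain ⟨F, hF1, hFz⟩ := exists_dual_vector 𝕜 (Submodule.Quotient.mk z : Q) (norm_ne_zero_iff.mpr hne)
  -- quotient map as a continuous linear map
  let π : X →L[𝕜] Q := LinearMap.mkContinuous M.mkQ 1 (fun y => by
    rw [one_mul]; exact hmkle y)
  have hπ : ∀ y : X, π y = Submodule.Quotient.mk y := fun y => rfl
  refine ⟨F.comp π, ⟨?_, ?_⟩, ?_⟩
  · apply le_antisymm
    · apply ContinuousLinearMap.opNorm_le_bound _ zero_le_one
      intro y
      calc ‖F (π y)‖ ≤ ‖F‖ * ‖π y‖ := F.le_opNorm _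
        _ ≤ 1 * ‖y‖ := by rw [hF1, one_mul]; simpa [hπ] using hmkle y
    · have : ‖(F.comp π) z‖ ≤ ‖F.comp π‖ * ‖z‖ := (F.comp π).le_opNorm z
      rw [hz, mul_one] at this
      refine le_trans ?_ this
      simp only [ContinuousLinearMap.comp_apply, hπ, hFz, hnorm]
      norm_num
  · simp only [ContinuousLinearMap.comp_apply, hπ, hFz, hnorm]
    norm_num
  · simp only [ContinuousLinearMap.comp_apply, hπ]
    have hx : (Submodule.Quotient.mk x : Q) = 0 :=
      (Submodule.Quotient.mk_eq_zero M).mpr (Submodule.mem_span_singleton_self x)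
    rw [hx, map_zero]

lemma orth_iff_dual {𝕜 X : Type*} [RCLike 𝕜] [NormedAddCommGroup X] [NormedSpace 𝕜 X]
    {z x : X} (hz : ‖z‖ = 1) :
    (∀ l : 𝕜, ‖z + l • x‖ ≥ ‖z‖) ↔ ∃ f : X →L[𝕜] 𝕜, (‖f‖ = 1 ∧ f z = 1) ∧ f x = 0 :=
  ⟨dual_of_orth hz, orth_of_dual hz⟩

theorem stmt_13 {𝕜 X : Type*} [RCLike 𝕜] [NormedAddCommGroup X] [NormedSpace 𝕜 X]
    {z₁ z₂ : X} (hz₁ : ‖z₁‖ = 1) (hz₂ : ‖z₂‖ = 1)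
    (hsupp : {f : X →L[𝕜] 𝕜 | ‖f‖ = 1 ∧ f z₁ = 1} = {f : X →L[𝕜] 𝕜 | ‖f‖ = 1 ∧ f z₂ = 1}) :
    {x : X | ∀ l : 𝕜, ‖z₁ + l • x‖ ≥ ‖z₁‖} = {x : X | ∀ l : 𝕜, ‖z₂ + l • x‖ ≥ ‖z₂‖} := by
  ext x
  simp only [Set.mem_setOf_eq]
  rw [orth_iff_dual hz₁, orth_iff_dual hz₂]
  constructor
  · rintro ⟨f, hf, hfx⟩
    have : f ∈ {f : X →L[𝕜] 𝕜 | ‖f‖ = 1 ∧ f z₂ = 1} := hsupp ▸ hf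
    exact ⟨f, this, hfx⟩
  · rintro ⟨f, hf, hfx⟩
    have : f ∈ {f : X →L[𝕜] 𝕜 | ‖f‖ = 1 ∧ f z₁ = 1} := hsupp.symm ▸ hf
    exact ⟨f, this, hfx⟩
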